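/- Let n ≥ 1, m > 0, β > 0, ν > 0, Γ ≥ 0, and let U : ℝ^{3n} × ℝ^{4n} → ℝ be twice continuously differentiable. Define ρ(r, q, π) = exp(−β·(Σ_{j=1}^{n} Σ_{l=1}^{3} V_l(qʲ, πʲ) + U(r, q))). Then ρ satisfies the stationary Fokker–Planck equation of the gradient-Langevin thermostat: at every point of ℝ^{3n} × ℝ^{4n} × ℝ^{4n}, Σ_{j=1}^{n} { (ν/(mβ))·Σ_{i=1}^{3} ∂²ρ/∂(r_iʲ)² + (MΓ/β)·Σ_{i=1}^{4} ∂²ρ/∂(π_iʲ)² − div_{qʲ}((∇_{πʲ} Σ_{l=1}^{3} V_l(qʲ, πʲ))·ρ) + div_{πʲ}((∇_{qʲ} Σ_{l=1}^{3} V_l(qʲ, πʲ) + ∇_{qʲ} U(r, q) + Γ·J(qʲ)·πʲ)·ρ) } + (ν/m)·div_r((∇_r U(r, q))·ρ) = 0. -/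

import Mathlib

noncomputable section
open Matrix
open scoped InnerProductSpace BigOperators

/-- `S₁ q = (−q₁, q₀, q₃, −q₂)`. -/
def S1 : Matrix (Fin 4) (Fin 4) ℝ := !![0,-1,0,0; 1,0,0,0; 0,0,0,1; 0,0,-1,0]
/-- `S₂ q = (−q₂, −q₃, q₀, q₁)`. -/
def S2 : Matrix (Fin 4) (Fin 4) ℝ := !![0,0,-1,0; 0,0,0,-1; 1,0,0,0; 0,1,0,0]
/-- `S₃ q = (−q₃, q₂, −q₁, q₀)`. -/
def S3 : Matrix (Fin 4) (Fin 4) ℝ := !![0,0,0,-1; 0,0,1,0; 0,-1,0,0; 1,0,0,0]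
/-- The family `S l`, `l = 1, 2, 3` (0-indexed). -/
def S : Fin 3 → Matrix (Fin 4) (Fin 4) ℝ := ![S1, S2, S3]

/-- `J(q) = (Σₗ (1/Iₗ) (Sₗ q)(Sₗ q)ᵀ) / (Σₗ 1/Iₗ)`. -/
def Jmat (I : Fin 3 → ℝ) (q : Fin 4 → ℝ) : Matrix (Fin 4) (Fin 4) ℝ :=
  (∑ l : Fin 3, 1 / I l)⁻¹ • ∑ l : Fin 3, (1 / I l) • vecMulVec (S l *ᵥ q) (S l *ᵥ q)

/-- `M = 4 / (Σₗ 1/Iₗ)`. -/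
def Mc (I : Fin 3 → ℝ) : ℝ := 4 / ∑ l : Fin 3, 1 / I l

/-- `λₗ = (1/Iₗ) / (Σₘ 1/Iₘ)`. -/
def lam (I : Fin 3 → ℝ) (l : Fin 3) : ℝ := (1 / I l) / ∑ m : Fin 3, 1 / I m

/-- `Vₗ(q, π) = (1/(8 Iₗ)) (πᵀ Sₗ q)²`. -/
def V (I : Fin 3 → ℝ) (l : Fin 3) (q π : Fin 4 → ℝ) : ℝ :=
  (1 / (8 * I l)) * (π ⬝ᵥ (S l *ᵥ q)) ^ 2

/-- Phase space `(r, q, π)` of the gradient-Langevin system for `n` rigid molecules. -/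
abbrev GPhase (n : ℕ) :=
  (Fin n → Fin 3 → ℝ) × (Fin n → Fin 4 → ℝ) × (Fin n → Fin 4 → ℝ)

/-- Coordinate direction for `r_i^j`. -/
def er (n : ℕ) (j : Fin n) (i : Fin 3) : GPhase n := (Pi.single j (Pi.single i 1), 0, 0)
/-- Coordinate direction for `q_i^j`. -/
def eQ (n : ℕ) (j : Fin n) (i : Fin 4) : GPhase n := (0, Pi.single j (Pi.single i 1), 0)
/-- Coordinate direction for `π_i^j`. -/
def ePi (n : ℕ) (j : Fin n) (i : Fin 4) : GPhase n := (0, 0, Pi.single j (Pi.single i 1))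

/-- First-order partial derivative of `f` in the coordinate direction `v`. -/
def Dv (n : ℕ) (f : GPhase n → ℝ) (v : GPhase n) (x : GPhase n) : ℝ := fderiv ℝ f x v

/-- Second-order partial derivative of `f` in the coordinate direction `v`. -/
def D2v (n : ℕ) (f : GPhase n → ℝ) (v : GPhase n) (x : GPhase n) : ℝ :=
  fderiv ℝ (fun y => fderiv ℝ f y v) x v

/-- The invariant density `ρ(r, q, π) = exp(−β (Σⱼ Σₗ Vₗ(qʲ, πʲ) + U(r, q)))`. -/
def rho (n : ℕ) (β : ℝ) (I : Fin 3 → ℝ)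
    (U : (Fin n → Fin 3 → ℝ) × (Fin n → Fin 4 → ℝ) → ℝ) (x : GPhase n) : ℝ :=
  Real.exp (-β * ((∑ j, ∑ l, V I l (x.2.1 j) (x.2.2 j)) + U (x.1, x.2.1)))

/-- `i`-th component of `∇_π Σₗ Vₗ(q, π)`. -/
def gradPiV (I : Fin 3 → ℝ) (q π : Fin 4 → ℝ) (i : Fin 4) : ℝ :=
  fderiv ℝ (fun p : Fin 4 → ℝ => ∑ l : Fin 3, V I l q p) π (Pi.single i 1)

/-- `i`-th component of `∇_q Σₗ Vₗ(q, π)`. -/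
def gradQV (I : Fin 3 → ℝ) (q π : Fin 4 → ℝ) (i : Fin 4) : ℝ :=
  fderiv ℝ (fun q' : Fin 4 → ℝ => ∑ l : Fin 3, V I l q' π) q (Pi.single i 1)
namespace Stmt16Aux

abbrev E4 := (Fin 4 → ℝ) × (Fin 4 → ℝ)

def dotCLM (a : Fin 4 → ℝ) : (Fin 4 → ℝ) →L[ℝ] ℝ :=
  ∑ i, a i • (ContinuousLinearMap.proj i : (Fin 4 → ℝ) →L[ℝ] ℝ)

@[simp] lemma dotCLM_apply (a u : Fin 4 → ℝ) : dotCLM a u = a ⬝ᵥ u := by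
  simp [dotCLM, dotProduct]

/-- The bilinear form `π ⬝ᵥ Sₗ q` on `E4`. -/
def Bf (l : Fin 3) (p : E4) : ℝ := p.2 ⬝ᵥ (S l *ᵥ p.1)

/-- Its derivative at `p`. -/
def BL (l : Fin 3) (p : E4) : E4 →L[ℝ] ℝ :=
  (dotCLM (p.2 ᵥ* S l)).comp (ContinuousLinearMap.fst ℝ _ _)
  + (dotCLM (S l *ᵥ p.1)).comp (ContinuousLinearMap.snd ℝ _ _)

lemma BL_apply (l : Fin 3) (p u : E4) :
    BL l p u = p.2 ⬝ᵥ (S l *ᵥ u.1) + u.2 ⬝ᵥ (S l *ᵥ p.1) := by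
  simp [BL, Matrix.dotProduct_mulVec]
  rw [dotProduct_comm]
  exact Matrix.dotProduct_mulVec _ _ _

lemma BL_symm (l : Fin 3) (p u : E4) : BL l p u = BL l u p := by
  rw [BL_apply, BL_apply, add_comm]

lemma hasFDerivAt_dot (a : Fin 4 → ℝ) (x : E4) :
    HasFDerivAt (fun p : E4 => a ⬝ᵥ p.1)
      ((dotCLM a).comp (ContinuousLinearMap.fst ℝ (Fin 4 → ℝ) (Fin 4 → ℝ))) x := by
  convert ((dotCLM a).comp
    (ContinuousLinearMap.fst ℝ (Fin 4 → ℝ) (Fin 4 → ℝ))).hasFDerivAt (x := x) using 1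
  funext p; simp

lemma hasFDerivAt_proj2 (i : Fin 4) (x : E4) :
    HasFDerivAt (fun p : E4 => p.2 i)
      ((ContinuousLinearMap.proj i).comp (ContinuousLinearMap.snd ℝ (Fin 4 → ℝ) (Fin 4 → ℝ))) x := by
  convert ((ContinuousLinearMap.proj i).comp
    (ContinuousLinearMap.snd ℝ (Fin 4 → ℝ) (Fin 4 → ℝ))).hasFDerivAt (x := x) using 1
  funext p; simp

lemma hasFDerivAt_Bf (l : Fin 3) (p : E4) : HasFDerivAt (Bf l) (BL l p) p := by
  have hfun : Bf l = fun p : E4 => ∑ i : Fin 4, p.2 i * (S l i ⬝ᵥ p.1) := by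
    funext p
    simp [Bf, dotProduct, Matrix.mulVec]
  have hCLM : BL l p = ∑ i : Fin 4,
      (p.2 i • ((dotCLM (S l i)).comp (ContinuousLinearMap.fst ℝ (Fin 4 → ℝ) (Fin 4 → ℝ)))
        + (S l i ⬝ᵥ p.1) • ((ContinuousLinearMap.proj i).comp
            (ContinuousLinearMap.snd ℝ (Fin 4 → ℝ) (Fin 4 → ℝ)))) := by
    refine ContinuousLinearMap.ext fun u => ?_
    rw [BL_apply]
    simp [dotProduct, Matrix.mulVec, Finset.mul_sum, Finset.sum_add_distrib]
    refine Finset.sum_congr rfl fun x _ => ?_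
    rw [Finset.sum_mul]
    exact Finset.sum_congr rfl fun i _ => by ring
  rw [hfun, hCLM]
  have H : HasFDerivAt (fun p : E4 => ∑ i : Fin 4, p.2 i * (S l i ⬝ᵥ p.1))
      (∑ i : Fin 4,
        ((p.2 i • ((dotCLM (S l i)).comp (ContinuousLinearMap.fst ℝ (Fin 4 → ℝ) (Fin 4 → ℝ)))
          + (S l i ⬝ᵥ p.1) • ((ContinuousLinearMap.proj i).comp
              (ContinuousLinearMap.snd ℝ (Fin 4 → ℝ) (Fin 4 → ℝ)))) : E4 →L[ℝ] ℝ)) p :=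
    HasFDerivAt.fun_sum (fun i _ => (hasFDerivAt_proj2 i p).mul (hasFDerivAt_dot (S l i) p))
  exact H

end Stmt16Aux
namespace Stmt16Aux

/-- `W(q,π) = Σₗ Vₗ(q,π)` as a function on `E4`. -/
def Wf (I : Fin 3 → ℝ) (p : E4) : ℝ := ∑ l, V I l p.1 p.2

/-- Derivative of `Wf` at `p`. -/
def WL (I : Fin 3 → ℝ) (p : E4) : E4 →L[ℝ] ℝ :=
  ∑ l, (1 / (4 * I l) * Bf l p) • BL l p

lemma WL_apply (I : Fin 3 → ℝ) (p u : E4) :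
    WL I p u = ∑ l, 1 / (4 * I l) * Bf l p * BL l p u := by
  simp [WL, mul_assoc]

lemma hasFDerivAt_Wf (I : Fin 3 → ℝ) (p : E4) : HasFDerivAt (Wf I) (WL I p) p := by
  have hfun : Wf I = fun p : E4 => ∑ l : Fin 3, 1 / (8 * I l) * (Bf l p * Bf l p) := by
    funext p
    simp [Wf, V, Bf, pow_two]
  have hCLM : WL I p = ∑ l : Fin 3,
      ((1 / (8 * I l)) • (Bf l p • BL l p + Bf l p • BL l p) : E4 →L[ℝ] ℝ) := by
    refine ContinuousLinearMap.ext fun u => ?_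
    rw [WL_apply]
    simp only [ContinuousLinearMap.sum_apply, ContinuousLinearMap.smul_apply,
      ContinuousLinearMap.add_apply, smul_eq_mul]
    exact Finset.sum_congr rfl fun l _ => by ring
  rw [hfun, hCLM]
  have H : HasFDerivAt (fun p : E4 => ∑ l : Fin 3, 1 / (8 * I l) * (Bf l p * Bf l p))
      (∑ l : Fin 3, ((1 / (8 * I l)) • (Bf l p • BL l p + Bf l p • BL l p) : E4 →L[ℝ] ℝ)) p :=
    HasFDerivAt.fun_sum (fun l _ =>
      (((hasFDerivAt_Bf l p).mul (hasFDerivAt_Bf l p)).const_mul (1 / (8 * I l))))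
  exact H

/-- Derivative of `p ↦ WL I p w`. -/
def WL2 (I : Fin 3 → ℝ) (w p : E4) : E4 →L[ℝ] ℝ :=
  ∑ l, ((1 / (4 * I l) * BL l w p) • BL l p + (1 / (4 * I l) * Bf l p) • BL l w)

lemma WL2_apply (I : Fin 3 → ℝ) (w p u : E4) :
    WL2 I w p u
      = ∑ l, (1 / (4 * I l) * BL l w p * BL l p u + 1 / (4 * I l) * Bf l p * BL l w u) := by
  simp [WL2, mul_assoc]

lemma WL2_symm (I : Fin 3 → ℝ) (w p u : E4) : WL2 I w p u = WL2 I u p w := by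
  rw [WL2_apply, WL2_apply]
  refine Finset.sum_congr rfl fun l _ => ?_
  rw [BL_symm l w p, BL_symm l p u, BL_symm l w u]
  ring

lemma hasFDerivAt_WL (I : Fin 3 → ℝ) (w p : E4) :
    HasFDerivAt (fun p : E4 => WL I p w) (WL2 I w p) p := by
  have hfun : (fun p : E4 => WL I p w)
      = fun p : E4 => ∑ l : Fin 3, 1 / (4 * I l) * (Bf l p * BL l w p) := by
    funext p
    rw [WL_apply]
    exact Finset.sum_congr rfl fun l _ => by rw [BL_symm l p w]; ring
  have hCLM : WL2 I w p = ∑ l : Fin 3,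
      ((1 / (4 * I l)) • (Bf l p • BL l w + (BL l w p) • BL l p) : E4 →L[ℝ] ℝ) := by
    refine ContinuousLinearMap.ext fun u => ?_
    rw [WL2_apply]
    simp only [ContinuousLinearMap.sum_apply, ContinuousLinearMap.smul_apply,
      ContinuousLinearMap.add_apply, smul_eq_mul]
    exact Finset.sum_congr rfl fun l _ => by ring
  rw [hfun, hCLM]
  have H : HasFDerivAt (fun p : E4 => ∑ l : Fin 3, 1 / (4 * I l) * (Bf l p * BL l w p))
      (∑ l : Fin 3, ((1 / (4 * I l)) • (Bf l p • BL l w + (BL l w p) • BL l p) : E4 →L[ℝ] ℝ)) p :=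
    HasFDerivAt.fun_sum (fun l _ =>
      (((hasFDerivAt_Bf l p).mul (BL l w).hasFDerivAt).const_mul (1 / (4 * I l))))
  exact H

lemma gradPiV_eq (I : Fin 3 → ℝ) (q π : Fin 4 → ℝ) (i : Fin 4) :
    gradPiV I q π i = WL I (q, π) ((0 : Fin 4 → ℝ), Pi.single i 1) := by
  have h : HasFDerivAt (fun p : Fin 4 → ℝ => ∑ l : Fin 3, V I l q p)
      ((WL I (q, π)).comp (ContinuousLinearMap.inr ℝ (Fin 4 → ℝ) (Fin 4 → ℝ))) π := by
    have h1 := (hasFDerivAt_Wf I (q, π)).comp π (hasFDerivAt_prodMk_right q π)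
    exact h1
  rw [gradPiV, h.fderiv]
  simp

lemma gradQV_eq (I : Fin 3 → ℝ) (q π : Fin 4 → ℝ) (i : Fin 4) :
    gradQV I q π i = WL I (q, π) (Pi.single i 1, (0 : Fin 4 → ℝ)) := by
  have h : HasFDerivAt (fun q' : Fin 4 → ℝ => ∑ l : Fin 3, V I l q' π)
      ((WL I (q, π)).comp (ContinuousLinearMap.inl ℝ (Fin 4 → ℝ) (Fin 4 → ℝ))) q := by
    have h1 := (hasFDerivAt_Wf I (q, π)).comp q (hasFDerivAt_prodMk_left q π :
      HasFDerivAt (fun e : Fin 4 → ℝ => (e, π)) (ContinuousLinearMap.inl ℝ (Fin 4 → ℝ) (Fin 4 → ℝ)) q)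
    exact h1
  rw [gradQV, h.fderiv]
  simp

end Stmt16Aux
namespace Stmt16Aux

lemma BL_pi (l : Fin 3) (p : E4) (i : Fin 4) :
    BL l p ((0 : Fin 4 → ℝ), Pi.single i 1) = Bf l (p.1, Pi.single i 1) := by
  rw [BL_apply]
  simp [Bf]

lemma BL_pi_pi (l : Fin 3) (i : Fin 4) :
    BL l ((0 : Fin 4 → ℝ), Pi.single i 1) ((0 : Fin 4 → ℝ), Pi.single i 1) = 0 := by
  rw [BL_apply]
  simp

/-- `Γ (J(q) π)_i` as a function on `E4`. -/
def JEf (I : Fin 3 → ℝ) (Γ : ℝ) (i : Fin 4) (p : E4) : ℝ :=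
  Γ * ((∑ l : Fin 3, 1 / I l)⁻¹ * ∑ l : Fin 3, 1 / I l * Bf l (p.1, Pi.single i 1) * Bf l p)

lemma Jterm_eq (I : Fin 3 → ℝ) (Γ : ℝ) (q π : Fin 4 → ℝ) (i : Fin 4) :
    Γ * (Jmat I q *ᵥ π) i = JEf I Γ i (q, π) := by
  have h1 : (Jmat I q *ᵥ π) i
      = (∑ l : Fin 3, 1 / I l)⁻¹ * ∑ l : Fin 3, 1 / I l * ((S l *ᵥ q) i * (S l *ᵥ q ⬝ᵥ π)) := by
    simp [Jmat, Matrix.mulVec, dotProduct, Matrix.sum_apply, Matrix.vecMulVec_apply,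
      Finset.mul_sum, Finset.sum_mul, mul_assoc]
    rw [Finset.sum_comm]
  rw [h1, JEf]
  have h2 : ∀ l : Fin 3, Bf l ((q, π).1, Pi.single i 1) = (S l *ᵥ q) i := by
    intro l
    simp [Bf, single_dotProduct]
  have h3 : ∀ l : Fin 3, Bf l (q, π) = S l *ᵥ q ⬝ᵥ π := by
    intro l
    simp [Bf, dotProduct_comm]
  simp only [h2, h3]
  ring_nf

/-- the linear functional `p ↦ (Sₗ p.1)ᵢ`. -/
def KiC (l : Fin 3) (i : Fin 4) : E4 →L[ℝ] ℝ :=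
  (dotCLM (Pi.single i 1 ᵥ* S l)).comp (ContinuousLinearMap.fst ℝ (Fin 4 → ℝ) (Fin 4 → ℝ))

lemma KiC_apply (l : Fin 3) (i : Fin 4) (p : E4) :
    KiC l i p = Bf l (p.1, Pi.single i 1) := by
  simp [KiC, Bf, Matrix.dotProduct_mulVec]

/-- derivative of `JEf`. -/
def JEL (I : Fin 3 → ℝ) (Γ : ℝ) (i : Fin 4) (p : E4) : E4 →L[ℝ] ℝ :=
  (Γ * (∑ l : Fin 3, 1 / I l)⁻¹) •
    ∑ l : Fin 3, ((1 / I l * Bf l p) • KiC l i + (1 / I l * Bf l (p.1, Pi.single i 1)) • BL l p)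

lemma hasFDerivAt_JEf (I : Fin 3 → ℝ) (Γ : ℝ) (i : Fin 4) (p : E4) :
    HasFDerivAt (JEf I Γ i) (JEL I Γ i p) p := by
  have hfun : JEf I Γ i
      = fun p : E4 => Γ * (∑ l : Fin 3, 1 / I l)⁻¹
          * ∑ l : Fin 3, 1 / I l * (KiC l i p * Bf l p) := by
    funext p
    have hl : ∀ l : Fin 3, 1 / I l * Bf l (p.1, Pi.single i 1) * Bf l p
        = 1 / I l * (KiC l i p * Bf l p) := fun l => by rw [KiC_apply]; ring
    rw [JEf]
    simp only [hl]
    ring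
  have hCLM : JEL I Γ i p = (Γ * (∑ l : Fin 3, 1 / I l)⁻¹) •
      ∑ l : Fin 3, ((1 / I l) • ((KiC l i p) • BL l p + (Bf l p) • KiC l i) : E4 →L[ℝ] ℝ) := by
    rw [JEL]
    congr 1
    refine Finset.sum_congr rfl fun l _ => ?_
    refine ContinuousLinearMap.ext fun u => ?_
    simp only [ContinuousLinearMap.smul_apply, ContinuousLinearMap.add_apply, smul_eq_mul,
      KiC_apply]
    ring
  rw [hfun, hCLM]
  have H : HasFDerivAt
      (fun p : E4 => ∑ l : Fin 3, 1 / I l * (KiC l i p * Bf l p))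
      (∑ l : Fin 3, ((1 / I l) • ((KiC l i p) • BL l p + (Bf l p) • KiC l i) : E4 →L[ℝ] ℝ)) p :=
    HasFDerivAt.fun_sum (fun l _ =>
      (((KiC l i).hasFDerivAt.mul (hasFDerivAt_Bf l p)).const_mul (1 / I l)))
  exact H.const_mul _

lemma JEL_pi (I : Fin 3 → ℝ) (Γ : ℝ) (i : Fin 4) (p : E4) :
    JEL I Γ i p ((0 : Fin 4 → ℝ), Pi.single i 1)
      = Γ * ((∑ l : Fin 3, 1 / I l)⁻¹
          * ∑ l : Fin 3, 1 / I l * (Bf l (p.1, Pi.single i 1) * Bf l (p.1, Pi.single i 1))) := by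
  rw [JEL]
  simp only [ContinuousLinearMap.smul_apply, ContinuousLinearMap.sum_apply,
    ContinuousLinearMap.add_apply, smul_eq_mul]
  rw [mul_assoc]
  congr 1
  congr 1
  refine Finset.sum_congr rfl fun l _ => ?_
  rw [BL_pi, KiC_apply]
  simp [Bf]
  ring

end Stmt16Aux
namespace Stmt16Aux

/-- projection on molecule `j`. -/
def pjC (n : ℕ) (j : Fin n) : GPhase n →L[ℝ] E4 :=
  ((ContinuousLinearMap.proj j).comp
    ((ContinuousLinearMap.fst ℝ (Fin n → Fin 4 → ℝ) (Fin n → Fin 4 → ℝ)).comp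
      (ContinuousLinearMap.snd ℝ (Fin n → Fin 3 → ℝ) ((Fin n → Fin 4 → ℝ) × (Fin n → Fin 4 → ℝ))))).prod
  ((ContinuousLinearMap.proj j).comp
    ((ContinuousLinearMap.snd ℝ (Fin n → Fin 4 → ℝ) (Fin n → Fin 4 → ℝ)).comp
      (ContinuousLinearMap.snd ℝ (Fin n → Fin 3 → ℝ) ((Fin n → Fin 4 → ℝ) × (Fin n → Fin 4 → ℝ)))))

@[simp] lemma pjC_apply {n : ℕ} (j : Fin n) (y : GPhase n) :
    pjC n j y = (y.2.1 j, y.2.2 j) := rfl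

/-- projection on the `(r, q)` variables. -/
def PC (n : ℕ) : GPhase n →L[ℝ] (Fin n → Fin 3 → ℝ) × (Fin n → Fin 4 → ℝ) :=
  (ContinuousLinearMap.fst ℝ (Fin n → Fin 3 → ℝ) ((Fin n → Fin 4 → ℝ) × (Fin n → Fin 4 → ℝ))).prod
  ((ContinuousLinearMap.fst ℝ (Fin n → Fin 4 → ℝ) (Fin n → Fin 4 → ℝ)).comp
    (ContinuousLinearMap.snd ℝ (Fin n → Fin 3 → ℝ) ((Fin n → Fin 4 → ℝ) × (Fin n → Fin 4 → ℝ))))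

@[simp] lemma PC_apply {n : ℕ} (y : GPhase n) : PC n y = (y.1, y.2.1) := rfl

/-- the exponent `H`. -/
def hFun (n : ℕ) (I : Fin 3 → ℝ)
    (U : (Fin n → Fin 3 → ℝ) × (Fin n → Fin 4 → ℝ) → ℝ) (y : GPhase n) : ℝ :=
  (∑ j, Wf I (pjC n j y)) + U (PC n y)

lemma rho_eq {n : ℕ} (β : ℝ) (I : Fin 3 → ℝ)
    (U : (Fin n → Fin 3 → ℝ) × (Fin n → Fin 4 → ℝ) → ℝ) :
    rho n β I U = fun y => Real.exp (-β * hFun n I U y) := rfl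

/-- derivative of `hFun`. -/
def LH (n : ℕ) (I : Fin 3 → ℝ)
    (U : (Fin n → Fin 3 → ℝ) × (Fin n → Fin 4 → ℝ) → ℝ) (y : GPhase n) : GPhase n →L[ℝ] ℝ :=
  (∑ j, (WL I (pjC n j y)).comp (pjC n j)) + (fderiv ℝ U (PC n y)).comp (PC n)

lemma hasFDerivAt_hFun {n : ℕ} {I : Fin 3 → ℝ}
    {U : (Fin n → Fin 3 → ℝ) × (Fin n → Fin 4 → ℝ) → ℝ} (hU : ContDiff ℝ 2 U) (y : GPhase n) :
    HasFDerivAt (hFun n I U) (LH n I U y) y := by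
  have h1 : HasFDerivAt (fun y : GPhase n => ∑ j, Wf I (pjC n j y))
      (∑ j, (WL I (pjC n j y)).comp (pjC n j)) y := by
    apply HasFDerivAt.fun_sum
    intro j _
    exact (hasFDerivAt_Wf I (pjC n j y)).comp y (pjC n j).hasFDerivAt
  have h2 : HasFDerivAt (fun y : GPhase n => U (PC n y))
      ((fderiv ℝ U (PC n y)).comp (PC n)) y := by
    have hu : HasFDerivAt U (fderiv ℝ U (PC n y)) (PC n y) :=
      ((hU.differentiable (by norm_num)) (PC n y)).hasFDerivAt
    exact hu.comp y (PC n).hasFDerivAt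
  exact h1.add h2

lemma hasFDerivAt_rho {n : ℕ} {β : ℝ} {I : Fin 3 → ℝ}
    {U : (Fin n → Fin 3 → ℝ) × (Fin n → Fin 4 → ℝ) → ℝ} (hU : ContDiff ℝ 2 U) (y : GPhase n) :
    HasFDerivAt (rho n β I U) ((rho n β I U y * -β) • LH n I U y) y := by
  have h := ((hasFDerivAt_hFun (I := I) hU y).const_mul (-β)).exp
  have e : (rho n β I U y * -β) • LH n I U y
      = Real.exp (-β * hFun n I U y) • ((-β) • LH n I U y) := by
    rw [smul_smul]; rfl
  rw [e, rho_eq β I U]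
  exact h

lemma fderiv_rho {n : ℕ} {β : ℝ} {I : Fin 3 → ℝ}
    {U : (Fin n → Fin 3 → ℝ) × (Fin n → Fin 4 → ℝ) → ℝ} (hU : ContDiff ℝ 2 U)
    (y v : GPhase n) :
    fderiv ℝ (rho n β I U) y v = -β * LH n I U y v * rho n β I U y := by
  rw [(hasFDerivAt_rho hU y).fderiv]
  simp only [ContinuousLinearMap.smul_apply, smul_eq_mul]
  ring

lemma LH_er {n : ℕ} {I : Fin 3 → ℝ}
    {U : (Fin n → Fin 3 → ℝ) × (Fin n → Fin 4 → ℝ) → ℝ} (y : GPhase n) (j : Fin n) (i : Fin 3) :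
    LH n I U y (er n j i)
      = fderiv ℝ U (PC n y) (Pi.single j (Pi.single i 1), 0) := by
  rw [LH]
  simp only [ContinuousLinearMap.add_apply, ContinuousLinearMap.sum_apply,
    ContinuousLinearMap.comp_apply, pjC_apply, PC_apply]
  have h0 : ∀ j' : Fin n, (((er n j i).2.1 j', (er n j i).2.2 j') : E4) = 0 := by
    intro j'; simp [er, Prod.ext_iff]
  simp only [h0, map_zero, Finset.sum_const_zero, zero_add]
  rfl

lemma LH_ePi {n : ℕ} {I : Fin 3 → ℝ}
    {U : (Fin n → Fin 3 → ℝ) × (Fin n → Fin 4 → ℝ) → ℝ} (y : GPhase n) (j : Fin n) (i : Fin 4) :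
    LH n I U y (ePi n j i)
      = WL I (pjC n j y) ((0 : Fin 4 → ℝ), Pi.single i 1) := by
  rw [LH]
  simp only [ContinuousLinearMap.add_apply, ContinuousLinearMap.sum_apply,
    ContinuousLinearMap.comp_apply, pjC_apply, PC_apply]
  have hU0 : (((ePi n j i).1, (ePi n j i).2.1) : (Fin n → Fin 3 → ℝ) × (Fin n → Fin 4 → ℝ)) = 0 := by
    simp [ePi, Prod.ext_iff]
  rw [hU0, map_zero, add_zero]
  rw [Finset.sum_eq_single j]
  · congr 1
    simp [ePi]
  · intro b _ hb
    have : (((ePi n j i).2.1 b, (ePi n j i).2.2 b) : E4) = 0 := by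
      simp [ePi, Prod.ext_iff, Pi.single_eq_of_ne hb]
    rw [this, map_zero]
  · intro h; exact absurd (Finset.mem_univ j) h

lemma LH_eQ {n : ℕ} {I : Fin 3 → ℝ}
    {U : (Fin n → Fin 3 → ℝ) × (Fin n → Fin 4 → ℝ) → ℝ} (y : GPhase n) (j : Fin n) (i : Fin 4) :
    LH n I U y (eQ n j i)
      = WL I (pjC n j y) (Pi.single i 1, (0 : Fin 4 → ℝ))
        + fderiv ℝ U (PC n y) (0, Pi.single j (Pi.single i 1)) := by
  rw [LH]
  simp only [ContinuousLinearMap.add_apply, ContinuousLinearMap.sum_apply,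
    ContinuousLinearMap.comp_apply, pjC_apply, PC_apply]
  congr 1
  · rw [Finset.sum_eq_single j]
    · congr 1
      simp [eQ]
    · intro b _ hb
      have : (((eQ n j i).2.1 b, (eQ n j i).2.2 b) : E4) = 0 := by
        simp [eQ, Prod.ext_iff, Pi.single_eq_of_ne hb]
      rw [this, map_zero]
    · intro h; exact absurd (Finset.mem_univ j) h

lemma pjC_ePi {n : ℕ} (j : Fin n) (i : Fin 4) :
    pjC n j (ePi n j i) = ((0 : Fin 4 → ℝ), Pi.single i 1) := by
  simp [ePi]

lemma pjC_eQ {n : ℕ} (j : Fin n) (i : Fin 4) :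
    pjC n j (eQ n j i) = (Pi.single i 1, (0 : Fin 4 → ℝ)) := by
  simp [eQ]

end Stmt16Aux
namespace Stmt16Aux

lemma WL_pi (I : Fin 3 → ℝ) (p : E4) (i : Fin 4) :
    WL I p ((0 : Fin 4 → ℝ), Pi.single i 1)
      = ∑ l, 1 / (4 * I l) * Bf l p * Bf l (p.1, Pi.single i 1) := by
  rw [WL_apply]
  exact Finset.sum_congr rfl fun l _ => by rw [BL_pi]

lemma WL2_pipi (I : Fin 3 → ℝ) (p : E4) (i : Fin 4) :
    WL2 I ((0 : Fin 4 → ℝ), Pi.single i 1) p ((0 : Fin 4 → ℝ), Pi.single i 1)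
      = ∑ l, 1 / (4 * I l) * Bf l (p.1, Pi.single i 1) ^ 2 := by
  rw [WL2_apply]
  refine Finset.sum_congr rfl fun l _ => ?_
  rw [BL_symm l ((0 : Fin 4 → ℝ), Pi.single i 1) p, BL_pi, BL_pi_pi]
  ring

lemma PC_ePi {n : ℕ} (j : Fin n) (i : Fin 4) : PC n (ePi n j i) = 0 := rfl

lemma fderiv_mul_rho {n : ℕ} {β : ℝ} {I : Fin 3 → ℝ}
    {U : (Fin n → Fin 3 → ℝ) × (Fin n → Fin 4 → ℝ) → ℝ} (hU : ContDiff ℝ 2 U)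
    (x v : GPhase n) (g : GPhase n → ℝ) (G : GPhase n →L[ℝ] ℝ) (hg : HasFDerivAt g G x) :
    fderiv ℝ (fun y => g y * rho n β I U y) x v
      = G v * rho n β I U x + g x * (-β * LH n I U x v * rho n β I U x) := by
  have h : HasFDerivAt (fun y => g y * rho n β I U y) _ x :=
    hg.mul (hasFDerivAt_rho (β := β) (I := I) hU x)
  rw [h.fderiv]
  simp only [ContinuousLinearMap.add_apply, ContinuousLinearMap.smul_apply,
    ContinuousLinearMap.coe_smul', Pi.smul_apply, smul_eq_mul]
  ring

lemma D2v_rho_eq {n : ℕ} {β : ℝ} {I : Fin 3 → ℝ}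
    {U : (Fin n → Fin 3 → ℝ) × (Fin n → Fin 4 → ℝ) → ℝ} (hU : ContDiff ℝ 2 U)
    (x v : GPhase n) (g : GPhase n → ℝ) (G : GPhase n →L[ℝ] ℝ)
    (hLH : ∀ y, LH n I U y v = g y) (hg : HasFDerivAt g G x) :
    D2v n (rho n β I U) v x
      = -β * G v * rho n β I U x + β ^ 2 * g x ^ 2 * rho n β I U x := by
  have hinner : (fun y => fderiv ℝ (rho n β I U) y v)
      = fun y => (-β * g y) * rho n β I U y := by
    funext y
    rw [fderiv_rho hU, hLH]
  simp only [D2v]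
  rw [hinner]
  have h2 := fderiv_mul_rho (β := β) (I := I) hU x v (fun y => -β * g y) ((-β) • G) (hg.const_mul (-β))
  beta_reduce at h2
  rw [h2, hLH x]
  simp only [ContinuousLinearMap.smul_apply, smul_eq_mul]
  ring

end Stmt16Aux
namespace Stmt16Aux

set_option maxHeartbeats 1000000 in
lemma key_identity (I : Fin 3 → ℝ) (hI : ∀ l, 0 < I l) (β Γ Uq ρ : ℝ) (hβ : β ≠ 0)
    (p : E4) (i : Fin 4) :
    Mc I * Γ / β
        * (-β * WL2 I ((0 : Fin 4 → ℝ), Pi.single i 1) p ((0 : Fin 4 → ℝ), Pi.single i 1) * ρ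
          + β ^ 2 * WL I p ((0 : Fin 4 → ℝ), Pi.single i 1) ^ 2 * ρ)
      - (WL2 I ((0 : Fin 4 → ℝ), Pi.single i 1) p (Pi.single i 1, (0 : Fin 4 → ℝ)) * ρ
          + WL I p ((0 : Fin 4 → ℝ), Pi.single i 1)
              * (-β * (WL I p (Pi.single i 1, (0 : Fin 4 → ℝ)) + Uq) * ρ))
      + ((WL2 I (Pi.single i 1, (0 : Fin 4 → ℝ)) p ((0 : Fin 4 → ℝ), Pi.single i 1)
            + JEL I Γ i p ((0 : Fin 4 → ℝ), Pi.single i 1)) * ρ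
          + (WL I p (Pi.single i 1, (0 : Fin 4 → ℝ)) + Uq + JEf I Γ i p)
              * (-β * WL I p ((0 : Fin 4 → ℝ), Pi.single i 1) * ρ)) = 0 := by
  have hI0 := hI 0
  have hI1 := hI 1
  have hI2 := hI 2
  rw [WL2_symm I ((0 : Fin 4 → ℝ), Pi.single i 1) p (Pi.single i 1, (0 : Fin 4 → ℝ))]
  rw [WL_pi, WL2_pipi, JEL_pi]
  simp only [JEf, Mc, Fin.sum_univ_three]
  have hs : (0:ℝ) < 1 / I 0 + 1 / I 1 + 1 / I 2 := by positivity
  field_simp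
  ring

end Stmt16Aux

open Stmt16Aux

set_option maxHeartbeats 1000000

/-- The density `ρ ∝ exp(−β(Σ V + U))` satisfies the stationary Fokker–Planck equation of
the gradient-Langevin thermostat `L*ρ = 0`. -/
theorem stmt16 (n : ℕ) (hn : 1 ≤ n) (m β ν Γ : ℝ)
    (hm : 0 < m) (hβ : 0 < β) (hν : 0 < ν) (hΓ : 0 ≤ Γ)
    (I : Fin 3 → ℝ) (hI : ∀ l, 0 < I l)
    (U : (Fin n → Fin 3 → ℝ) × (Fin n → Fin 4 → ℝ) → ℝ) (hU : ContDiff ℝ 2 U)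
    (x : GPhase n) :
    (∑ j : Fin n,
      ((ν / (m * β)) * ∑ i : Fin 3, D2v n (rho n β I U) (er n j i) x
       + (Mc I * Γ / β) * ∑ i : Fin 4, D2v n (rho n β I U) (ePi n j i) x
       - ∑ i : Fin 4,
           Dv n (fun y => gradPiV I (y.2.1 j) (y.2.2 j) i * rho n β I U y) (eQ n j i) x
       + ∑ i : Fin 4,
           Dv n (fun y =>
             (gradQV I (y.2.1 j) (y.2.2 j) i
              + fderiv ℝ U (y.1, y.2.1) (0, Pi.single j (Pi.single i 1))
              + Γ * (Jmat I (y.2.1 j) *ᵥ y.2.2 j) i) * rho n β I U y)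
             (ePi n j i) x))
    + (ν / m) * ∑ j : Fin n, ∑ i : Fin 3,
        Dv n (fun y =>
          fderiv ℝ U (y.1, y.2.1) (Pi.single j (Pi.single i 1), 0) * rho n β I U y)
          (er n j i) x
    = 0 := by
  have hβ' : β ≠ 0 := ne_of_gt hβ
  have hm' : m ≠ 0 := ne_of_gt hm
  have hI0 := hI 0
  have hI1 := hI 1
  have hI2 := hI 2
  have hgUd : ∀ w : (Fin n → Fin 3 → ℝ) × (Fin n → Fin 4 → ℝ),
      Differentiable ℝ (fun z : (Fin n → Fin 3 → ℝ) × (Fin n → Fin 4 → ℝ) =>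
        fderiv ℝ U z w) := by
    intro w
    have hfd1 : ContDiff ℝ 1 (fderiv ℝ U) := hU.fderiv_right (by norm_num)
    exact (ContinuousLinearMap.apply ℝ ℝ w).differentiable.comp (hfd1.differentiable (by norm_num))
  rw [Finset.mul_sum, ← Finset.sum_add_distrib]
  refine Finset.sum_eq_zero fun j _ => ?_
  -- the r-direction derivatives
  have hgr : ∀ i : Fin 3, HasFDerivAt
      (fun y : GPhase n => fderiv ℝ U (PC n y) (Pi.single j (Pi.single i 1), 0))
      ((fderiv ℝ (fun z => fderiv ℝ U z (Pi.single j (Pi.single i 1), 0)) (PC n x)).comp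
        (PC n)) x := by
    intro i
    exact ((hgUd _ (PC n x)).hasFDerivAt).comp x (PC n).hasFDerivAt
  have hr : ∀ i : Fin 3, D2v n (rho n β I U) (er n j i) x
      = -β * ((fderiv ℝ (fun z => fderiv ℝ U z (Pi.single j (Pi.single i 1), 0)) (PC n x)).comp
            (PC n)) (er n j i) * rho n β I U x
        + β ^ 2 * (fderiv ℝ U (PC n x) (Pi.single j (Pi.single i 1), 0)) ^ 2
            * rho n β I U x := by
    intro i
    exact D2v_rho_eq (β := β) hU x (er n j i) _ _ (fun y => LH_er y j i) (hgr i)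
  have hEterm : ∀ i : Fin 3,
      Dv n (fun y =>
          fderiv ℝ U (y.1, y.2.1) (Pi.single j (Pi.single i 1), 0) * rho n β I U y)
        (er n j i) x
      = ((fderiv ℝ (fun z => fderiv ℝ U z (Pi.single j (Pi.single i 1), 0)) (PC n x)).comp
            (PC n)) (er n j i) * rho n β I U x
        + fderiv ℝ U (PC n x) (Pi.single j (Pi.single i 1), 0)
            * (-β * fderiv ℝ U (PC n x) (Pi.single j (Pi.single i 1), 0) * rho n β I U x) := by
    intro i
    have h := fderiv_mul_rho (β := β) (I := I) hU x (er n j i) _ _ (hgr i)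
    simp only [Dv]
    rw [show (fun y : GPhase n =>
          fderiv ℝ U (y.1, y.2.1) (Pi.single j (Pi.single i 1), 0) * rho n β I U y)
        = (fun y : GPhase n =>
          fderiv ℝ U (PC n y) (Pi.single j (Pi.single i 1), 0) * rho n β I U y) from rfl]
    rw [h, LH_er]
  have h3 : (ν / (m * β)) * ∑ i : Fin 3, D2v n (rho n β I U) (er n j i) x
      + (ν / m) * ∑ i : Fin 3, Dv n (fun y =>
          fderiv ℝ U (y.1, y.2.1) (Pi.single j (Pi.single i 1), 0) * rho n β I U y)
          (er n j i) x = 0 := by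
    rw [Finset.mul_sum, Finset.mul_sum, ← Finset.sum_add_distrib]
    refine Finset.sum_eq_zero fun i _ => ?_
    rw [hr i, hEterm i]
    field_simp
    ring
  -- the q/pi-direction derivatives
  have hgW : ∀ w : E4, HasFDerivAt (fun y : GPhase n => WL I (pjC n j y) w)
      ((WL2 I w (pjC n j x)).comp (pjC n j)) x := fun w =>
    (hasFDerivAt_WL I w (pjC n j x)).comp x (pjC n j).hasFDerivAt
  have hB : ∀ i : Fin 4, D2v n (rho n β I U) (ePi n j i) x
      = -β * WL2 I ((0 : Fin 4 → ℝ), Pi.single i 1) (pjC n j x)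
            ((0 : Fin 4 → ℝ), Pi.single i 1) * rho n β I U x
        + β ^ 2 * WL I (pjC n j x) ((0 : Fin 4 → ℝ), Pi.single i 1) ^ 2 * rho n β I U x := by
    intro i
    have h := D2v_rho_eq (β := β) hU x (ePi n j i) _ _ (fun y => LH_ePi y j i)
      (hgW ((0 : Fin 4 → ℝ), Pi.single i 1))
    rw [h]
    simp only [ContinuousLinearMap.comp_apply, pjC_ePi]
  have hCterm : ∀ i : Fin 4,
      Dv n (fun y => gradPiV I (y.2.1 j) (y.2.2 j) i * rho n β I U y) (eQ n j i) x
      = WL2 I ((0 : Fin 4 → ℝ), Pi.single i 1) (pjC n j x)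
            (Pi.single i 1, (0 : Fin 4 → ℝ)) * rho n β I U x
        + WL I (pjC n j x) ((0 : Fin 4 → ℝ), Pi.single i 1)
            * (-β * (WL I (pjC n j x) (Pi.single i 1, (0 : Fin 4 → ℝ))
                + fderiv ℝ U (PC n x) (0, Pi.single j (Pi.single i 1))) * rho n β I U x) := by
    intro i
    simp only [Dv]
    rw [show (fun y : GPhase n => gradPiV I (y.2.1 j) (y.2.2 j) i * rho n β I U y)
        = (fun y : GPhase n =>
            WL I (pjC n j y) ((0 : Fin 4 → ℝ), Pi.single i 1) * rho n β I U y) from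
      funext fun y => by rw [gradPiV_eq]; rfl]
    rw [fderiv_mul_rho (β := β) (I := I) hU x (eQ n j i) _ _
      (hgW ((0 : Fin 4 → ℝ), Pi.single i 1)), LH_eQ]
    simp only [ContinuousLinearMap.comp_apply, pjC_eQ]
  have hDterm : ∀ i : Fin 4,
      Dv n (fun y =>
          (gradQV I (y.2.1 j) (y.2.2 j) i
            + fderiv ℝ U (y.1, y.2.1) (0, Pi.single j (Pi.single i 1))
            + Γ * (Jmat I (y.2.1 j) *ᵥ y.2.2 j) i) * rho n β I U y) (ePi n j i) x
      = (WL2 I (Pi.single i 1, (0 : Fin 4 → ℝ)) (pjC n j x) ((0 : Fin 4 → ℝ), Pi.single i 1)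
          + JEL I Γ i (pjC n j x) ((0 : Fin 4 → ℝ), Pi.single i 1)) * rho n β I U x
        + (WL I (pjC n j x) (Pi.single i 1, (0 : Fin 4 → ℝ))
            + fderiv ℝ U (PC n x) (0, Pi.single j (Pi.single i 1))
            + JEf I Γ i (pjC n j x))
          * (-β * WL I (pjC n j x) ((0 : Fin 4 → ℝ), Pi.single i 1) * rho n β I U x) := by
    intro i
    simp only [Dv]
    rw [show (fun y : GPhase n =>
          (gradQV I (y.2.1 j) (y.2.2 j) i
            + fderiv ℝ U (y.1, y.2.1) (0, Pi.single j (Pi.single i 1))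
            + Γ * (Jmat I (y.2.1 j) *ᵥ y.2.2 j) i) * rho n β I U y)
        = (fun y : GPhase n =>
          (WL I (pjC n j y) (Pi.single i 1, (0 : Fin 4 → ℝ))
            + fderiv ℝ U (PC n y) (0, Pi.single j (Pi.single i 1))
            + JEf I Γ i (pjC n j y)) * rho n β I U y) from
      funext fun y => by rw [gradQV_eq, Jterm_eq]; rfl]
    have hg : HasFDerivAt (fun y : GPhase n =>
        WL I (pjC n j y) (Pi.single i 1, (0 : Fin 4 → ℝ))
          + fderiv ℝ U (PC n y) (0, Pi.single j (Pi.single i 1))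
          + JEf I Γ i (pjC n j y))
        (((WL2 I (Pi.single i 1, (0 : Fin 4 → ℝ)) (pjC n j x)).comp (pjC n j)
          + (fderiv ℝ (fun z => fderiv ℝ U z (0, Pi.single j (Pi.single i 1))) (PC n x)).comp
              (PC n))
          + (JEL I Γ i (pjC n j x)).comp (pjC n j)) x := by
      refine HasFDerivAt.add (HasFDerivAt.add (hgW _) ?_) ?_
      · exact ((hgUd _ (PC n x)).hasFDerivAt).comp x (PC n).hasFDerivAt
      · exact (hasFDerivAt_JEf I Γ i (pjC n j x)).comp x (pjC n j).hasFDerivAt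
    rw [fderiv_mul_rho (β := β) (I := I) hU x (ePi n j i) _ _ hg, LH_ePi]
    simp only [ContinuousLinearMap.add_apply, ContinuousLinearMap.comp_apply, pjC_ePi,
      PC_ePi, map_zero]
    ring
  have h4 : (Mc I * Γ / β) * ∑ i : Fin 4, D2v n (rho n β I U) (ePi n j i) x
      - ∑ i : Fin 4,
          Dv n (fun y => gradPiV I (y.2.1 j) (y.2.2 j) i * rho n β I U y) (eQ n j i) x
      + ∑ i : Fin 4,
          Dv n (fun y =>
            (gradQV I (y.2.1 j) (y.2.2 j) i
              + fderiv ℝ U (y.1, y.2.1) (0, Pi.single j (Pi.single i 1))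
              + Γ * (Jmat I (y.2.1 j) *ᵥ y.2.2 j) i) * rho n β I U y)
            (ePi n j i) x = 0 := by
    rw [Finset.mul_sum, ← Finset.sum_sub_distrib, ← Finset.sum_add_distrib]
    refine Finset.sum_eq_zero fun i _ => ?_
    rw [hB i, hCterm i, hDterm i]
    exact key_identity I hI β Γ (fderiv ℝ U (PC n x) (0, Pi.single j (Pi.single i 1)))
      (rho n β I U x) hβ' (pjC n j x) i
  linarith [h3, h4]
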